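/- For every vector p ∈ ℝ^N and m = N/2 = 2^{n−1}, the sum of the first half of the entries of T p satisfies the exact identity ∑_{k=0}^{m−1} (Tp)_k = ∑_{k=0}^{m−1} p_k + (e^ε·p_m − e^{−ε}·p_{m−1})/z. -/

import Mathlib

open Real Matrix Finset

/-- The TSAC transition matrix `T` on the diagonal of the computation-qubit density
matrix: `N = 2^n`, `z = e^ε + e^{-ε}`, `T 0 0 = T 0 1 = e^ε/z`,
`T (N-1) (N-2) = T (N-1) (N-1) = e^{-ε}/z`, and for `0 < i < N-1`,
`T i (i-1) = e^{-ε}/z`, `T i (i+1) = e^ε/z`; all other entries vanish. -/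
noncomputable def Tmat (n : ℕ) (ε : ℝ) : Matrix (Fin (2 ^ n)) (Fin (2 ^ n)) ℝ :=
  fun i j =>
    if (i : ℕ) = 0 then
      if (j : ℕ) ≤ 1 then Real.exp ε / (Real.exp ε + Real.exp (-ε)) else 0
    else if (i : ℕ) = 2 ^ n - 1 then
      if 2 ^ n - 2 ≤ (j : ℕ) then Real.exp (-ε) / (Real.exp ε + Real.exp (-ε)) else 0
    else if (j : ℕ) + 1 = (i : ℕ) then Real.exp (-ε) / (Real.exp ε + Real.exp (-ε))
    else if (j : ℕ) = (i : ℕ) + 1 then Real.exp ε / (Real.exp ε + Real.exp (-ε))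
    else 0


private lemma tsac_aux (a b : ℝ) (hab : a + b = 1) (q : ℕ → ℝ) :
    ∀ m, 1 ≤ m →
    (∑ k ∈ Finset.range m,
        (if k = 0 then a * q 0 + a * q 1 else b * q (k - 1) + a * q (k + 1)))
      = ∑ k ∈ Finset.range m, q k + (a * q m - b * q (m - 1)) := by
  intro m
  induction m with
  | zero => intro h; omega
  | succ m ih =>
    intro _
    rcases Nat.eq_zero_or_pos m with h0 | hpos
    · subst h0
      rw [Finset.sum_range_one, Finset.sum_range_one, if_pos rfl]
      norm_num
      linear_combination (q 0) * hab
    · rw [Finset.sum_range_succ, ih hpos, Finset.sum_range_succ,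
        if_neg (by omega : m ≠ 0)]
      simp only [Nat.add_sub_cancel]
      linear_combination (q m) * hab

private lemma tsac_core (N m : ℕ) (hm1 : 1 ≤ m) (hmN : m < N) (hmN' : m - 1 < N)
    (a b : ℝ) (hab : a + b = 1)
    (T : Matrix (Fin N) (Fin N) ℝ)
    (hT0 : ∀ j : Fin N, T ⟨0, by omega⟩ j = if (j : ℕ) ≤ 1 then a else 0)
    (hTi : ∀ i j : Fin N, 0 < (i : ℕ) → (i : ℕ) < N - 1 →
        T i j = if (j : ℕ) + 1 = (i : ℕ) then b
          else if (j : ℕ) = (i : ℕ) + 1 then a else 0)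
    (p : Fin N → ℝ) :
    (∑ k : Fin N, if (k : ℕ) < m then T.mulVec p k else 0)
      = (∑ k : Fin N, if (k : ℕ) < m then p k else 0)
        + (a * p ⟨m, hmN⟩ - b * p ⟨m - 1, hmN'⟩) := by
  have hN2 : 2 ≤ N := by omega
  set q : ℕ → ℝ := fun k => if h : k < N then p ⟨k, h⟩ else 0 with hq
  have hqm : q m = p ⟨m, hmN⟩ := by rw [hq]; exact dif_pos hmN
  have hqm' : q (m - 1) = p ⟨m - 1, hmN'⟩ := by rw [hq]; exact dif_pos hmN'
  have convert_sum : ∀ F : Fin N → ℝ,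
      (∑ k : Fin N, if (k : ℕ) < m then F k else 0)
        = ∑ j ∈ Finset.range m,
            (fun j => if h : j < N then (if j < m then F ⟨j, h⟩ else 0) else 0) j := by
    intro F
    have e1 : (∑ k : Fin N, if (k : ℕ) < m then F k else 0)
        = ∑ j ∈ Finset.range N,
            (fun j => if h : j < N then (if j < m then F ⟨j, h⟩ else 0) else 0) j := by
      rw [← Fin.sum_univ_eq_sum_range]
      apply Finset.sum_congr rfl
      intro k _
      simp only [dif_pos k.isLt, Fin.eta]
    rw [e1]
    refine (Finset.sum_subset (Finset.range_subset_range.2 (le_of_lt hmN)) ?_).symm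
    intro x hx hx'
    simp only [Finset.mem_range] at hx hx'
    simp only [dif_pos hx, if_neg hx']
  -- row 0 of T p
  have row0 : T.mulVec p ⟨0, by omega⟩ = a * q 0 + a * q 1 := by
    rw [Matrix.mulVec, dotProduct]
    have step : ∀ j : Fin N, T ⟨0, by omega⟩ j * p j =
        (if j = (⟨0, by omega⟩ : Fin N) then a * p j else 0) +
        (if j = (⟨1, by omega⟩ : Fin N) then a * p j else 0) := by
      intro j
      rw [hT0 j]
      split_ifs
      all_goals try ring
      all_goals (exfalso; simp only [Fin.ext_iff, Fin.val_mk] at *; omega)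
    rw [Finset.sum_congr rfl fun j _ => step j, Finset.sum_add_distrib]
    simp only [Finset.sum_ite_eq' Finset.univ, Finset.mem_univ, if_pos, hq]
    rw [dif_pos (by omega : (0:ℕ) < N), dif_pos (by omega : (1:ℕ) < N)]
  -- inner rows
  have rowk : ∀ (k : ℕ) (hk0 : 0 < k) (hk : k < m),
      T.mulVec p ⟨k, by omega⟩ = b * q (k - 1) + a * q (k + 1) := by
    intro k hk0 hk
    have hkm1 : k - 1 < N := by omega
    have hkp1 : k + 1 < N := by omega
    rw [Matrix.mulVec, dotProduct]
    have step : ∀ j : Fin N, T ⟨k, by omega⟩ j * p j =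
        (if j = (⟨k - 1, hkm1⟩ : Fin N) then b * p j else 0) +
        (if j = (⟨k + 1, hkp1⟩ : Fin N) then a * p j else 0) := by
      intro j
      rw [hTi ⟨k, by omega⟩ j (by simpa using hk0) (by simp; omega)]
      split_ifs
      all_goals try ring
      all_goals (exfalso; simp only [Fin.ext_iff, Fin.val_mk] at *; omega)
    rw [Finset.sum_congr rfl fun j _ => step j, Finset.sum_add_distrib]
    simp only [Finset.sum_ite_eq' Finset.univ, Finset.mem_univ, if_pos, hq]
    rw [dif_pos hkm1, dif_pos hkp1]
  -- assemble
  rw [convert_sum (T.mulVec p), convert_sum p]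
  have lhs_eq : ∀ j ∈ Finset.range m,
      (fun j => if h : j < N then (if j < m then T.mulVec p ⟨j, h⟩ else 0) else 0) j
        = (if j = 0 then a * q 0 + a * q 1 else b * q (j - 1) + a * q (j + 1)) := by
    intro j hj
    rw [Finset.mem_range] at hj
    dsimp only
    rw [dif_pos (by omega : j < N), if_pos hj]
    rcases Nat.eq_zero_or_pos j with h0 | hpos
    · subst h0; rw [if_pos rfl]; exact row0
    · rw [if_neg (by omega)]; exact rowk j hpos hj
  have rhs_eq : ∀ j ∈ Finset.range m,
      (fun j => if h : j < N then (if j < m then p ⟨j, h⟩ else 0) else 0) j = q j := by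
    intro j hj
    rw [Finset.mem_range] at hj
    dsimp only
    rw [dif_pos (by omega : j < N), if_pos hj, hq]
    dsimp only
    rw [dif_pos (by omega : j < N)]
  rw [Finset.sum_congr rfl lhs_eq, Finset.sum_congr rfl rhs_eq,
    tsac_aux a b hab q m hm1, hqm, hqm']

/-- Exact identity for the sum of the first half of the entries of `T p`:
with `m = N/2 = 2^{n-1}`,
`∑_{k<m} (Tp)_k = ∑_{k<m} p_k + (e^ε p_m - e^{-ε} p_{m-1})/z`. -/
theorem tsac_half_sum_identity (n : ℕ) (hn : 1 ≤ n) (ε : ℝ) (hε : 0 < ε)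
    (p : Fin (2 ^ n) → ℝ) :
    ∀ (hm : 2 ^ (n - 1) < 2 ^ n) (hm' : 2 ^ (n - 1) - 1 < 2 ^ n),
      (∑ k : Fin (2 ^ n), if (k : ℕ) < 2 ^ (n - 1) then (Tmat n ε).mulVec p k else 0) =
        (∑ k : Fin (2 ^ n), if (k : ℕ) < 2 ^ (n - 1) then p k else 0) +
          (Real.exp ε * p ⟨2 ^ (n - 1), hm⟩ -
            Real.exp (-ε) * p ⟨2 ^ (n - 1) - 1, hm'⟩) /
            (Real.exp ε + Real.exp (-ε)) := by
  intro hm hm'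
  have hm1 : 1 ≤ 2 ^ (n - 1) := Nat.one_le_two_pow
  have hz : Real.exp ε + Real.exp (-ε) ≠ 0 := by positivity
  have hab : Real.exp ε / (Real.exp ε + Real.exp (-ε))
      + Real.exp (-ε) / (Real.exp ε + Real.exp (-ε)) = 1 := by
    rw [← add_div, div_self hz]
  rw [tsac_core _ _ hm1 hm hm' _ _ hab (Tmat n ε) ?_ ?_ p]
  · rw [sub_div]; ring
  · intro j; simp [Tmat]
  · intro i j h1 h2
    simp only [Tmat]
    rw [if_neg (by omega), if_neg (by omega)]
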